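/- Let c > 1, ε > 0, ξ ≥ 0, t ≥ 1, and let f : [0, t] → ℝ be a continuous function such that ∫₀ᵗ ∫₀ᵗ ( exp(|f(x) − f(y)|² / (2c|x − y|)) − 1 ) dx dy ≤ t^{2(1+ε)} ξ. Then for all 0 ≤ s ≤ t with h := t − s > 0, |f(t) − f(s)| ≤ 8√(2c) · ( √(ln(4ξ + 1)) + √2 (1 + √π) ) · √( h (1 + ln(t/h) + ε |ln t|) ). -/

import Mathlib

open MeasureTheory Filter
open scoped ENNReal NNReal

set_option maxHeartbeats 1000000

namespace DetGRR

lemma sqrt_add_le {a b : ℝ} (ha : 0 ≤ a) (hb : 0 ≤ b) :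
    Real.sqrt (a + b) ≤ Real.sqrt a + Real.sqrt b := by
  rw [Real.sqrt_le_left (by positivity)]
  nlinarith [Real.sq_sqrt ha, Real.sq_sqrt hb, Real.sqrt_nonneg a, Real.sqrt_nonneg b,
    mul_nonneg (Real.sqrt_nonneg a) (Real.sqrt_nonneg b)]

lemma markov_third {a b : ℝ} (hab : a < b) (g : ℝ → ℝ≥0∞) (hg : Measurable g)
    (G : ℝ≥0∞) (hGt : G ≠ ⊤) (hi : ∫⁻ x in Set.Ioo a b, g x ≤ G) :
    volume.restrict (Set.Ioo a b) {x | 3 * G / ENNReal.ofReal (b - a) < g x} ≤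
      ENNReal.ofReal (b - a) / 3 := by
  set m := ENNReal.ofReal (b - a) with hm
  have hm0 : m ≠ 0 := by
    simp only [hm, ne_eq, ENNReal.ofReal_eq_zero, not_le]; linarith
  have hmt : m ≠ ⊤ := ENNReal.ofReal_ne_top
  by_cases hG : G = 0
  · subst hG
    have h0 : g =ᵐ[volume.restrict (Set.Ioo a b)] 0 := by
      rw [← lintegral_eq_zero_iff hg]
      exact le_antisymm (by simpa using hi) zero_le
    have : volume.restrict (Set.Ioo a b) {x | g x ≠ 0} = 0 := h0
    calc volume.restrict (Set.Ioo a b) {x | 3 * 0 / m < g x}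
        ≤ volume.restrict (Set.Ioo a b) {x | g x ≠ 0} := by
          apply measure_mono; intro x hx; simp only [Set.mem_setOf_eq] at *
          simp only [mul_zero, ENNReal.zero_div] at hx
          exact (pos_iff_ne_zero.mp hx)
      _ = 0 := this
      _ ≤ m / 3 := zero_le
  · set ε := 3 * G / m with hε
    have hε0 : ε ≠ 0 := by
      rw [hε]
      simp only [ne_eq, ENNReal.div_eq_zero_iff, not_or]
      refine ⟨?_, hmt⟩
      simp [hG]
    have hεt : ε ≠ ⊤ := by
      rw [hε]
      exact (ENNReal.div_lt_top (ENNReal.mul_ne_top (by simp) hGt) hm0).ne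
    have key := meas_ge_le_lintegral_div (μ := volume.restrict (Set.Ioo a b)) hg.aemeasurable hε0 hεt
    have hGle : (∫⁻ a_1, g a_1 ∂volume.restrict (Set.Ioo a b)) / ε ≤ G / ε :=
      ENNReal.div_le_div_right hi ε
    have hGfin : G ≠ ⊤ := hGt
    have hεfin : ε ≠ ⊤ := hεt
    have hcalc : G / ε = m / 3 := by
      have h1 : (G / ε).toReal = (m / 3).toReal := by
        rw [ENNReal.toReal_div, ENNReal.toReal_div, ENNReal.toReal_div,
          ENNReal.toReal_mul]
        have hG0 : G.toReal ≠ 0 := ENNReal.toReal_ne_zero.mpr ⟨hG, hGt⟩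
        have hm0' : m.toReal ≠ 0 := ENNReal.toReal_ne_zero.mpr ⟨hm0, hmt⟩
        have h3 : ((3:ℝ≥0∞)).toReal = 3 := by simp
        rw [h3]
        field_simp
      have h2 : G / ε ≠ ⊤ := (ENNReal.div_lt_top hGt hε0).ne
      have h3 : m / 3 ≠ ⊤ := (ENNReal.div_lt_top hmt (by norm_num)).ne
      exact (ENNReal.toReal_eq_toReal_iff' h2 h3).mp h1
    calc volume.restrict (Set.Ioo a b) {x | ε < g x}
        ≤ volume.restrict (Set.Ioo a b) {x | ε ≤ g x} := by
          apply measure_mono; intro x hx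
          simp only [Set.mem_setOf_eq] at hx ⊢; exact hx.le
      _ ≤ (∫⁻ a_1, g a_1 ∂volume.restrict (Set.Ioo a b)) / ε := key
      _ ≤ G / ε := hGle
      _ = m / 3 := hcalc

lemma selection {a b : ℝ} (hab : a < b)
    (g₁ g₂ : ℝ → ℝ≥0∞) (hm₁ : Measurable g₁) (hm₂ : Measurable g₂)
    (G₁ G₂ : ℝ≥0∞) (hG₁t : G₁ ≠ ⊤) (hG₂t : G₂ ≠ ⊤)
    (hi₁ : ∫⁻ x in Set.Ioo a b, g₁ x ≤ G₁) (hi₂ : ∫⁻ x in Set.Ioo a b, g₂ x ≤ G₂) :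
    ∃ x ∈ Set.Ioo a b, g₁ x ≤ 3 * G₁ / ENNReal.ofReal (b - a) ∧
      g₂ x ≤ 3 * G₂ / ENNReal.ofReal (b - a) := by
  set m := ENNReal.ofReal (b - a) with hm
  have hm0 : m ≠ 0 := by
    simp only [hm, ne_eq, ENNReal.ofReal_eq_zero, not_le]; linarith
  have hmt : m ≠ ⊤ := ENNReal.ofReal_ne_top
  by_contra hcon
  push_neg at hcon
  have hsub : Set.Ioo a b ⊆ {x | 3 * G₁ / m < g₁ x} ∪ {x | 3 * G₂ / m < g₂ x} := by
    intro x hx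
    by_cases h1 : g₁ x ≤ 3 * G₁ / m
    · exact Or.inr (hcon x hx h1)
    · exact Or.inl (not_le.mp h1)
  have hμ : m ≤ m / 3 + m / 3 := by
    calc m = volume (Set.Ioo a b) := (Real.volume_Ioo).symm
      _ = volume.restrict (Set.Ioo a b) (Set.Ioo a b) := by
            rw [Measure.restrict_apply measurableSet_Ioo]; simp
      _ ≤ volume.restrict (Set.Ioo a b) ({x | 3 * G₁ / m < g₁ x} ∪ {x | 3 * G₂ / m < g₂ x}) :=
            measure_mono hsub
      _ ≤ _ := le_trans (measure_union_le _ _)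
            (add_le_add (markov_third hab g₁ hm₁ G₁ hG₁t hi₁) (markov_third hab g₂ hm₂ G₂ hG₂t hi₂))
  have : m / 3 + m / 3 < m := by
    have h1 : m / 3 + m / 3 = 2 * m / 3 := by
      rw [ENNReal.div_add_div_same]; ring_nf
    rw [h1, ENNReal.div_lt_iff (Or.inl (by norm_num)) (Or.inl (by norm_num))]
    calc 2 * m < 3 * m := by
          apply ENNReal.mul_lt_mul_iff_left hm0 hmt |>.mpr; norm_num
      _ = m * 3 := mul_comm _ _
  exact absurd hμ (not_le.mpr this)


lemma chain (T : Set ℝ)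
    (Φ : ℝ → ℝ → ℝ≥0∞) (hΦ : Measurable (Function.uncurry Φ))
    (hsymm : ∀ x y, Φ x y = Φ y x)
    (B : ℝ≥0∞) (hBt : B ≠ ⊤)
    (hintT : ∫⁻ x in T, ∫⁻ y in T, Φ x y ≤ B)
    (g : ℝ → ℝ≥0∞) (hg : Measurable g) (G : ℝ≥0∞) (hGt : G ≠ ⊤)
    (hgi : ∫⁻ x in T, g x ≤ G)
    (α β : ℕ → ℝ) (hab : ∀ n, α n < β n)
    (hsub : ∀ n, Set.Ioo (α n) (β n) ⊆ T)
    (hnest : ∀ n, Set.Ioo (α (n+1)) (β (n+1)) ⊆ Set.Ioo (α n) (β n)) :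
    ∃ u : ℕ → ℝ,
      (∀ n, u n ∈ Set.Ioo (α n) (β n)) ∧
      g (u 0) ≤ 3 * G / ENNReal.ofReal (β 0 - α 0) ∧
      (∀ n, (∫⁻ y in T, Φ (u n) y) ≤ 3 * B / ENNReal.ofReal (β n - α n)) ∧
      (∀ n, Φ (u (n+1)) (u n) ≤
        3 * (∫⁻ y in T, Φ (u n) y) / ENNReal.ofReal (β (n+1) - α (n+1))) := by
  set I : ℝ → ℝ≥0∞ := fun x => ∫⁻ y in T, Φ x y with hI
  have hImeas : Measurable I := Measurable.lintegral_prod_right' hΦ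
  have hIint : ∀ n, ∫⁻ x in Set.Ioo (α n) (β n), I x ≤ B := fun n =>
    le_trans (lintegral_mono_set (hsub n)) hintT
  -- base step
  obtain ⟨x0, hx0, hIx0, hgx0⟩ := selection (hab 0) I g hImeas hg B G hBt hGt (hIint 0)
    (le_trans (lintegral_mono_set (hsub 0)) hgi)
  -- inductive step
  have step : ∀ (n : ℕ) (x : ℝ), I x ≤ 3 * B / ENNReal.ofReal (β n - α n) →
      ∃ y, y ∈ Set.Ioo (α (n+1)) (β (n+1)) ∧
        I y ≤ 3 * B / ENNReal.ofReal (β (n+1) - α (n+1)) ∧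
        Φ y x ≤ 3 * I x / ENNReal.ofReal (β (n+1) - α (n+1)) := by
    intro n x hx
    have hΦx : Measurable (fun y => Φ y x) := by
      have : (fun y => Φ y x) = Function.uncurry Φ ∘ (fun y => (y, x)) := rfl
      rw [this]
      exact hΦ.comp (measurable_id.prodMk measurable_const)
    have hIxt : I x ≠ ⊤ := by
      refine ne_top_of_le_ne_top ?_ hx
      exact (ENNReal.div_lt_top (ENNReal.mul_ne_top (by simp) hBt)
        (by simp only [ne_eq, ENNReal.ofReal_eq_zero, not_le]; linarith [hab n])).ne
    have hiΦ : ∫⁻ y in Set.Ioo (α (n+1)) (β (n+1)), Φ y x ≤ I x := by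
      refine le_trans (lintegral_mono_set (fun z hz => hsub n (hnest n hz))) ?_
      rw [hI]
      exact le_of_eq (lintegral_congr fun y => hsymm y x)
    obtain ⟨y, hy, h1, h2⟩ := selection (hab (n+1)) I (fun y => Φ y x) hImeas hΦx B (I x)
      hBt hIxt (hIint (n+1)) hiΦ
    exact ⟨y, hy, h1, h2⟩
  choose! next hmem hInext hlink using step
  set u : ℕ → ℝ := fun n => Nat.rec x0 (fun n xn => next n xn) n with hu
  have hu0 : u 0 = x0 := rfl
  have huS : ∀ n, u (n+1) = next n (u n) := fun n => rfl
  have hgood : ∀ n, u n ∈ Set.Ioo (α n) (β n) ∧ I (u n) ≤ 3 * B / ENNReal.ofReal (β n - α n) := by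
    intro n
    induction n with
    | zero => exact ⟨hx0, hIx0⟩
    | succ n ih =>
      rw [huS n]
      exact ⟨hmem n (u n) ih.2, hInext n (u n) ih.2⟩
  refine ⟨u, fun n => (hgood n).1, ?_, fun n => (hgood n).2, fun n => ?_⟩
  · rw [hu0]; exact hgx0
  · rw [huS n]
    exact hlink n (u n) (hgood n).2


lemma increment_bound (F : ℝ → ℝ) (c : ℝ) (hc : 0 < c) (x y : ℝ) (r ℓ : ℝ) (hr : 0 ≤ r)
    (hxy : |x - y| ≤ ℓ)
    (h : ENNReal.ofReal (Real.exp (|F x - F y| ^ 2 / (2 * c * |x - y|)) - 1) ≤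
      ENNReal.ofReal r) :
    |F x - F y| ≤ Real.sqrt (2 * c * ℓ * Real.log (1 + r)) := by
  have hlog : 0 ≤ Real.log (1 + r) := Real.log_nonneg (by linarith)
  by_cases hxy0 : x = y
  · subst hxy0; simp [Real.sqrt_nonneg]
  · have hd : 0 < |x - y| := abs_pos.mpr (sub_ne_zero.mpr hxy0)
    have hle : Real.exp (|F x - F y| ^ 2 / (2 * c * |x - y|)) - 1 ≤ r :=
      (ENNReal.ofReal_le_ofReal_iff hr).mp h
    have hq : |F x - F y| ^ 2 / (2 * c * |x - y|) ≤ Real.log (1 + r) := by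
      rw [Real.le_log_iff_exp_le (by linarith)]
      linarith
    have h2 : |F x - F y| ^ 2 ≤ 2 * c * |x - y| * Real.log (1 + r) := by
      rw [div_le_iff₀ (by positivity)] at hq
      linarith [hq]
    have h3 : |F x - F y| ^ 2 ≤ 2 * c * ℓ * Real.log (1 + r) := by
      have : 2 * c * |x - y| * Real.log (1 + r) ≤ 2 * c * ℓ * Real.log (1 + r) := by
        apply mul_le_mul_of_nonneg_right _ hlog
        nlinarith
      linarith
    calc |F x - F y| = Real.sqrt (|F x - F y| ^ 2) := by
          rw [Real.sqrt_sq (abs_nonneg _)]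
      _ ≤ Real.sqrt (2 * c * ℓ * Real.log (1 + r)) := Real.sqrt_le_sqrt h3

lemma sum_geom (C D : ℝ) (hC : 0 ≤ C) (hD : 0 ≤ D) (N : ℕ) :
    ∑ n ∈ Finset.range N, (1/2:ℝ)^n * (C + n * D) ≤ 2*C + 2*D := by
  have key : ∀ M : ℕ, ∑ n ∈ Finset.range M, (1/2:ℝ)^n * (C + n * D)
      = 2*(C+D) - (C + D*(M+1)) * 2 * (1/2)^M := by
    intro M
    induction M with
    | zero => push_cast; ring_nf
    | succ M ih =>
      rw [Finset.sum_range_succ, ih]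
      push_cast
      ring
  rw [key N]
  have : 0 ≤ (C + D*(N+1)) * 2 * (1/2:ℝ)^N := by positivity
  linarith

lemma three_div (r ℓR : ℝ) (hr : 0 ≤ r) (hl : 0 < ℓR) :
    3 * ENNReal.ofReal r / ENNReal.ofReal ℓR = ENNReal.ofReal (3 * r / ℓR) := by
  rw [ENNReal.ofReal_div_of_pos hl, ENNReal.ofReal_mul (by norm_num : (0:ℝ) ≤ 3)]
  norm_num

lemma numeric : Real.sqrt (Real.log 9) + 4*Real.sqrt (Real.log 36) + 4*Real.sqrt (Real.log 16)
    + 2*Real.sqrt 2 ≤ 8 * (Real.sqrt 2 * Real.sqrt Real.pi) := by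
  have he : (2.7182818283:ℝ) < Real.exp 1 := Real.exp_one_gt_d9
  have l3 : Real.log 3 ≤ 1.1036384 := by
    have h1 : Real.log (3 / Real.exp 1) ≤ 3 / Real.exp 1 - 1 :=
      Real.log_le_sub_one_of_pos (by positivity)
    rw [Real.log_div (by norm_num) (Real.exp_ne_zero 1), Real.log_exp] at h1
    have h2 : 3 / Real.exp 1 ≤ 3 / 2.7182818283 := by
      apply div_le_div_of_nonneg_left (by norm_num) (by norm_num) he.le
    have h3 : (3:ℝ) / 2.7182818283 ≤ 1.1036384 := by norm_num
    linarith
  have l2 : Real.log 2 ≤ 0.6931471808 := Real.log_two_lt_d9.le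
  have h9 : Real.log 9 ≤ 2.2072768 := by
    have : (9:ℝ) = 3^2 := by norm_num
    rw [this, Real.log_pow]
    push_cast; linarith
  have h36 : Real.log 36 ≤ 3.5935712 := by
    have : (36:ℝ) = 2^2 * 3^2 := by norm_num
    rw [this, Real.log_mul (by norm_num) (by norm_num), Real.log_pow, Real.log_pow]
    push_cast; linarith
  have h16 : Real.log 16 ≤ 2.7725888 := by
    have : (16:ℝ) = 2^4 := by norm_num
    rw [this, Real.log_pow]
    push_cast; linarith
  have s9 : Real.sqrt (Real.log 9) ≤ 1.4858 := by
    rw [Real.sqrt_le_left (by norm_num)]; nlinarith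
  have s36 : Real.sqrt (Real.log 36) ≤ 1.8958 := by
    rw [Real.sqrt_le_left (by norm_num)]; nlinarith
  have s16 : Real.sqrt (Real.log 16) ≤ 1.6652 := by
    rw [Real.sqrt_le_left (by norm_num)]; nlinarith
  have s2 : Real.sqrt 2 ≤ 1.4143 := by
    rw [Real.sqrt_le_left (by norm_num)]; norm_num
  have s2' : (1.4142:ℝ) ≤ Real.sqrt 2 := by
    rw [Real.le_sqrt (by norm_num) (by norm_num)]; norm_num
  have spi : (1.7724:ℝ) ≤ Real.sqrt Real.pi := by
    rw [Real.le_sqrt (by norm_num) Real.pi_nonneg]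
    nlinarith [Real.pi_gt_d6]
  nlinarith [mul_le_mul s2' spi (by norm_num) (Real.sqrt_nonneg 2)]


lemma main_pos (c ε ξ t : ℝ) (hc : 1 < c) (hε : 0 < ε) (hξ : 0 < ξ) (ht : 1 ≤ t)
    (f : ℝ → ℝ) (hf : ContinuousOn f (Set.Icc 0 t))
    (hint : ∫⁻ x in Set.Icc (0:ℝ) t, ∫⁻ y in Set.Icc (0:ℝ) t,
        ENNReal.ofReal (Real.exp (|f x - f y| ^ 2 / (2 * c * |x - y|)) - 1) ≤
      ENNReal.ofReal (t ^ (2 * (1 + ε)) * ξ)) :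
    ∀ s : ℝ, 0 ≤ s → s < t →
      |f t - f s| ≤
        8 * Real.sqrt (2 * c) *
          (Real.sqrt (Real.log (4 * ξ + 1)) + Real.sqrt 2 * (1 + Real.sqrt Real.pi)) *
          Real.sqrt ((t - s) * (1 + Real.log (t / (t - s)) + ε * |Real.log t|)) := by
  intro s hs hst
  have ht0 : (0:ℝ) < t := lt_of_lt_of_le one_pos ht
  have hc0 : (0:ℝ) < c := lt_trans one_pos hc
  set h : ℝ := t - s with hh_def
  have hh : 0 < h := by rw [hh_def]; linarith
  have hht : h ≤ t := by rw [hh_def]; linarith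
  -- continuous extension of f to all of ℝ
  set F : ℝ → ℝ := fun x => f (max 0 (min x t)) with hF_def
  have hmaps : ∀ x : ℝ, max 0 (min x t) ∈ Set.Icc 0 t := fun x =>
    ⟨le_max_left _ _, max_le ht0.le (min_le_right x t)⟩
  have hF : Continuous F := hf.comp_continuous
    (continuous_const.max (continuous_id.min continuous_const)) hmaps
  have hFf : ∀ x ∈ Set.Icc (0:ℝ) t, F x = f x := by
    intro x hx
    simp only [hF_def]
    congr 1
    rw [min_eq_left hx.2, max_eq_right hx.1]
  set Φ : ℝ → ℝ → ℝ≥0∞ := fun x y =>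
    ENNReal.ofReal (Real.exp (|F x - F y| ^ 2 / (2 * c * |x - y|)) - 1) with hΦ_def
  have hΦmeas : Measurable (Function.uncurry Φ) := by
    apply ENNReal.measurable_ofReal.comp
    apply Measurable.sub _ measurable_const
    apply Real.measurable_exp.comp
    apply Measurable.div
    · exact (((hF.measurable.comp measurable_fst).sub
        (hF.measurable.comp measurable_snd)).abs.pow_const 2)
    · exact (measurable_const.mul ((measurable_fst.sub measurable_snd).abs))
  have hsymm : ∀ x y, Φ x y = Φ y x := by
    intro x y; simp only [hΦ_def]
    rw [abs_sub_comm (F x), abs_sub_comm x]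
  set b : ℝ := t ^ (2 * (1 + ε)) * ξ with hb_def
  have hb : 0 < b := mul_pos (Real.rpow_pos_of_pos ht0 _) hξ
  set B : ℝ≥0∞ := ENNReal.ofReal b with hB_def
  have hBt : B ≠ ⊤ := ENNReal.ofReal_ne_top
  set T : Set ℝ := Set.Icc 0 t with hT_def
  have hintF : ∫⁻ x in T, ∫⁻ y in T, Φ x y ≤ B := by
    refine le_trans (le_of_eq ?_) hint
    apply setLIntegral_congr_fun measurableSet_Icc
    intro x hx
    apply setLIntegral_congr_fun measurableSet_Icc
    intro y hy
    simp only [hΦ_def]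
    rw [hFf x hx, hFf y hy]
  -- logarithm bookkeeping
  set L₁ : ℝ := Real.log (4 * ξ + 1) with hL₁_def
  set P₂ : ℝ := Real.log (t / h) with hP₂_def
  set Q₂ : ℝ := ε * Real.log t with hQ₂_def
  have hL₁ : 0 ≤ L₁ := Real.log_nonneg (by linarith)
  have hP₂ : 0 ≤ P₂ := Real.log_nonneg ((one_le_div hh).mpr hht)
  have hQ₂ : 0 ≤ Q₂ := mul_nonneg hε.le (Real.log_nonneg ht)
  have hlogt : 0 ≤ Real.log t := Real.log_nonneg ht
  have hP₂' : P₂ = Real.log t - Real.log h := Real.log_div (ne_of_gt ht0) (ne_of_gt hh)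
  have hK : h ^ 2 ≤ t ^ (2 * (1 + ε)) := by
    have h1 : t ^ (2:ℝ) ≤ t ^ (2 * (1 + ε)) :=
      Real.rpow_le_rpow_of_exponent_le ht (by nlinarith)
    have h2 : t ^ (2:ℝ) = t ^ (2:ℕ) := by
      rw [← Real.rpow_natCast t 2]; norm_num
    rw [h2] at h1
    nlinarith
  have logb : ∀ A : ℝ, 1 ≤ A →
      Real.log (1 + A * b / h ^ 2) ≤ L₁ + Real.log A + 2 * P₂ + 2 * Q₂ := by
    intro A hA
    have hAK : 1 ≤ A * (t ^ (2 * (1 + ε)) / h ^ 2) := by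
      have : (1:ℝ) ≤ t ^ (2 * (1 + ε)) / h ^ 2 := (one_le_div (by positivity)).mpr hK
      nlinarith
    have hstep : 1 + A * b / h ^ 2 ≤ (4 * ξ + 1) * A * t ^ (2 * (1 + ε)) / h ^ 2 := by
      have e1 : A * b / h ^ 2 = (A * (t ^ (2*(1+ε)) / h^2)) * ξ := by
        rw [hb_def]; field_simp
      have e2 : (4*ξ+1) * A * t ^ (2*(1+ε)) / h^2 = (A * (t ^ (2*(1+ε)) / h^2)) * (4*ξ+1) := by
        field_simp
      rw [e1, e2]
      have hk0 : 0 ≤ (A * (t ^ (2*(1+ε)) / h^2)) * ξ :=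
        mul_nonneg (le_trans zero_le_one hAK) hξ.le
      nlinarith [hAK, hξ.le]
    have hpos : (0:ℝ) < 1 + A * b / h ^ 2 := by positivity
    refine le_trans (Real.log_le_log hpos hstep) ?_
    rw [Real.log_div (by positivity) (by positivity),
      Real.log_mul (by positivity) (by positivity),
      Real.log_mul (by positivity) (by positivity), Real.log_rpow ht0, Real.log_pow]
    push_cast
    linarith [hP₂', hQ₂_def]
  -- dyadic lengths
  set ℓ : ℕ → ℝ := fun n => h * (1/4)^n with hℓ_def
  have hℓpos : ∀ n : ℕ, (0:ℝ) < ℓ n := fun n => by simp only [hℓ_def]; positivity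
  have hℓle : ∀ n : ℕ, ℓ n ≤ h := by
    intro n
    simp only [hℓ_def]
    have h1 : ((1/4:ℝ))^n ≤ 1 := pow_le_one₀ (by norm_num : (0:ℝ) ≤ 1/4) (by norm_num)
    nlinarith
  have hℓanti : ∀ n, ℓ (n+1) ≤ ℓ n := by
    intro n
    simp only [hℓ_def]
    exact mul_le_mul_of_nonneg_left
      (pow_le_pow_of_le_one (by norm_num) (by norm_num) (Nat.le_succ n)) hh.le
  have hℓ0 : ℓ 0 = h := by simp only [hℓ_def]; norm_num
  -- generic conversions
  have huI_conv : ∀ (w : ℝ) (n : ℕ), (∫⁻ y in T, Φ w y) ≤ 3 * B / ENNReal.ofReal (ℓ n) →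
      (∫⁻ y in T, Φ w y) ≤ ENNReal.ofReal (3 * b / ℓ n) := by
    intro w n hw
    rw [hB_def] at hw
    rwa [three_div b (ℓ n) hb.le (hℓpos n)] at hw
  have link_conv : ∀ (x y : ℝ) (n : ℕ),
      Φ x y ≤ 3 * (∫⁻ z in T, Φ y z) / ENNReal.ofReal (ℓ (n+1)) →
      (∫⁻ z in T, Φ y z) ≤ ENNReal.ofReal (3 * b / ℓ n) →
      Φ x y ≤ ENNReal.ofReal (36 * 16^n * b / h^2) := by
    intro x y n h1 h2
    have h3 : Φ x y ≤ 3 * ENNReal.ofReal (3 * b / ℓ n) / ENNReal.ofReal (ℓ (n+1)) :=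
      le_trans h1 (ENNReal.div_le_div_right (mul_le_mul_right h2 3) _)
    rw [three_div _ _ (by positivity) (hℓpos (n+1))] at h3
    have heq : 3 * (3 * b / ℓ n) / ℓ (n+1) = 36 * 16^n * b / h^2 := by
      simp only [hℓ_def]
      have e4 : ((1/4:ℝ))^n = ((4:ℝ)^n)⁻¹ := by rw [one_div, inv_pow]
      have e4' : ((1/4:ℝ))^(n+1) = ((4:ℝ)^(n+1))⁻¹ := by rw [one_div, inv_pow]
      have e16 : (16:ℝ)^n = 4^n * 4^n := by rw [← mul_pow]; norm_num
      have h4n : ((4:ℝ))^n ≠ 0 := by positivity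
      have h4n' : ((4:ℝ))^(n+1) ≠ 0 := by positivity
      rw [e4, e4', e16]
      field_simp
      ring
    rwa [heq] at h3
  -- log bound for the dyadic scales
  have hXn : ∀ n : ℕ, Real.log (1 + 36 * 16^n * b / h^2) ≤
      (L₁ + Real.log 36 + 2*P₂ + 2*Q₂) + n * Real.log 16 := by
    intro n
    have h16 : (1:ℝ) ≤ 16^n := by simpa using pow_le_pow_right₀ (by norm_num : (1:ℝ) ≤ 16) (Nat.zero_le n)
    have hA : (1:ℝ) ≤ 36 * 16^n := by nlinarith
    have hlb := logb (36 * 16^n) hA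
    rw [Real.log_mul (by norm_num) (by positivity), Real.log_pow] at hlb
    linarith
  have hlog36 : 0 ≤ Real.log 36 := Real.log_nonneg (by norm_num)
  have hlog16 : 0 ≤ Real.log 16 := Real.log_nonneg (by norm_num)
  have hlog9 : 0 ≤ Real.log 9 := Real.log_nonneg (by norm_num)
  set SC : ℝ := Real.sqrt L₁ + Real.sqrt (Real.log 36) + Real.sqrt (2*P₂) + Real.sqrt (2*Q₂)
    with hSC_def
  have hSC0 : 0 ≤ SC := by rw [hSC_def]; positivity
  set CC : ℝ := Real.sqrt (2*c*h) * SC with hCC_def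
  set DD : ℝ := Real.sqrt (2*c*h) * Real.sqrt (Real.log 16) with hDD_def
  have hCC0 : 0 ≤ CC := by rw [hCC_def]; positivity
  have hDD0 : 0 ≤ DD := by rw [hDD_def]; positivity
  -- generic increment bound for a chain
  have dstep_gen : ∀ (w : ℕ → ℝ), (∀ n, |w (n+1) - w n| ≤ ℓ n) →
      (∀ n, Φ (w (n+1)) (w n) ≤ ENNReal.ofReal (36 * 16^n * b / h^2)) →
      ∀ n : ℕ, |F (w (n+1)) - F (w n)| ≤ (1/2:ℝ)^n * (CC + n * DD) := by
    intro w habs hlink n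
    have hd : |F (w (n+1)) - F (w n)| ≤
        Real.sqrt (2*c*(ℓ n) * Real.log (1 + 36 * 16^n * b / h^2)) := by
      apply increment_bound F c hc0 _ _ _ _ (by positivity) (habs n)
      have hl := hlink n
      simp only [hΦ_def] at hl
      exact hl
    refine le_trans hd ?_
    have e0 : 2*c*(ℓ n) * Real.log (1 + 36 * 16^n * b / h^2)
        = (2*c*h * Real.log (1 + 36 * 16^n * b / h^2)) * ((1/2:ℝ)^n)^2 := by
      have e1 : ((1/2:ℝ)^n)^2 = (1/4)^n := by
        rw [← pow_mul, mul_comm n 2, pow_mul]; norm_num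
      rw [e1, hℓ_def]; ring
    have hlogX : 0 ≤ Real.log (1 + 36 * 16^n * b / h^2) :=
      Real.log_nonneg (by nlinarith [div_nonneg (by positivity : (0:ℝ) ≤ 36 * 16^n * b) (by positivity : (0:ℝ) ≤ h^2)])
    rw [e0, Real.sqrt_mul (by positivity), Real.sqrt_sq (by positivity), mul_comm]
    apply mul_le_mul_of_nonneg_left _ (by positivity)
    rw [Real.sqrt_mul (by positivity : (0:ℝ) ≤ 2*c*h)]
    have hX : Real.sqrt (Real.log (1 + 36 * 16^n * b / h^2)) ≤
        SC + n * Real.sqrt (Real.log 16) := by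
      refine le_trans (Real.sqrt_le_sqrt (hXn n)) ?_
      refine le_trans (sqrt_add_le (by positivity) (by positivity)) ?_
      have h1 : Real.sqrt (L₁ + Real.log 36 + 2*P₂ + 2*Q₂) ≤ SC := by
        calc Real.sqrt (L₁ + Real.log 36 + 2*P₂ + 2*Q₂)
            ≤ Real.sqrt (L₁ + Real.log 36 + 2*P₂) + Real.sqrt (2*Q₂) :=
              sqrt_add_le (by positivity) (by positivity)
          _ ≤ (Real.sqrt (L₁ + Real.log 36) + Real.sqrt (2*P₂)) + Real.sqrt (2*Q₂) :=
              add_le_add_left (sqrt_add_le (by positivity) (by positivity)) _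
          _ ≤ ((Real.sqrt L₁ + Real.sqrt (Real.log 36)) + Real.sqrt (2*P₂)) + Real.sqrt (2*Q₂) :=
              add_le_add_left (add_le_add_left (sqrt_add_le hL₁ hlog36) _) _
          _ = SC := by rw [hSC_def]
      have h2 : Real.sqrt ((n:ℝ) * Real.log 16) ≤ n * Real.sqrt (Real.log 16) := by
        rw [Real.sqrt_mul (Nat.cast_nonneg n)]
        apply mul_le_mul_of_nonneg_right _ (Real.sqrt_nonneg _)
        rw [Real.sqrt_le_left (Nat.cast_nonneg n)]
        exact_mod_cast Nat.le_self_pow (by norm_num) n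
      linarith
    calc Real.sqrt (2*c*h) * Real.sqrt (Real.log (1 + 36 * 16^n * b / h^2))
        ≤ Real.sqrt (2*c*h) * (SC + n * Real.sqrt (Real.log 16)) :=
          mul_le_mul_of_nonneg_left hX (Real.sqrt_nonneg _)
      _ = CC + n * DD := by rw [hCC_def, hDD_def]; ring
  -- generic telescoping + limit
  have lim_gen : ∀ (w : ℕ → ℝ) (p : ℝ), Filter.Tendsto w Filter.atTop (nhds p) →
      (∀ n : ℕ, |F (w (n+1)) - F (w n)| ≤ (1/2:ℝ)^n * (CC + n * DD)) →
      |F (w 0) - F p| ≤ 2*CC + 2*DD := by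
    intro w p hwp hstep
    have tele : ∀ N, |F (w 0) - F (w N)| ≤ 2*CC + 2*DD := by
      intro N
      have h1 := dist_le_range_sum_dist (fun n => F (w n)) N
      simp only [Real.dist_eq] at h1
      refine le_trans h1 (le_trans (Finset.sum_le_sum (fun n _ => ?_))
        (sum_geom CC DD hCC0 hDD0 N))
      rw [abs_sub_comm]
      exact hstep n
    have h2 : Filter.Tendsto (fun N => |F (w 0) - F (w N)|) Filter.atTop
        (nhds (|F (w 0) - F p|)) := by
      have h3 := (hF.tendsto p).comp hwp
      exact ((continuous_const.sub continuous_id).abs.tendsto (F p)).comp h3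
    exact le_of_tendsto h2 (Filter.Eventually.of_forall tele)
  -- the bottom chain (towards s)
  obtain ⟨u, humem, -, huI, hulink⟩ := chain T Φ hΦmeas hsymm B hBt hintF
    (fun _ => (0:ℝ≥0∞)) measurable_const 0 (by simp) (by simp)
    (fun _ => s) (fun n => s + ℓ n)
    (fun n => by show s < s + ℓ n; have := hℓpos n; linarith)
    (fun n x hx => by
      have hx1 : s < x := hx.1
      have hx2 : x < s + ℓ n := hx.2
      have h1 := hℓle n
      rw [hT_def]
      have hst' : s + h = t := by rw [hh_def]; ring
      exact ⟨by linarith, by linarith⟩)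
    (fun n x hx => by
      have hx1 : s < x := hx.1
      have hx2 : x < s + ℓ (n+1) := hx.2
      have h1 := hℓanti n
      exact ⟨hx1, show x < s + ℓ n by linarith⟩)
  have humem' : ∀ n, s < u n ∧ u n < s + ℓ n := fun n => humem n
  have huI' : ∀ n, (∫⁻ y in T, Φ (u n) y) ≤ ENNReal.ofReal (3 * b / ℓ n) := by
    intro n
    apply huI_conv
    have h1 := huI n
    simpa using h1
  have hulink' : ∀ n, Φ (u (n+1)) (u n) ≤ ENNReal.ofReal (36 * 16^n * b / h^2) := by
    intro n
    apply link_conv _ _ n _ (huI' n)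
    have h1 := hulink n
    simpa using h1
  have huabs : ∀ n, |u (n+1) - u n| ≤ ℓ n := by
    intro n
    have h1 := humem' (n+1)
    have h2 := humem' n
    have h3 := hℓanti n
    rw [abs_le]
    constructor <;> [skip; skip] <;> [linarith [h1.1, h2.2]; linarith [h1.2, h2.1]]
  have hustep := dstep_gen u huabs hulink'
  have hulim : Filter.Tendsto u Filter.atTop (nhds s) := by
    have hup : Filter.Tendsto (fun N => s + ℓ N) Filter.atTop (nhds s) := by
      have h1 := (tendsto_pow_atTop_nhds_zero_of_lt_one
        (by norm_num : (0:ℝ) ≤ 1/4) (by norm_num : (1/4:ℝ) < 1)).const_mul h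
      have h2 : Filter.Tendsto (fun N : ℕ => s + h * (1/4:ℝ)^N) Filter.atTop
          (nhds (s + h * 0)) := tendsto_const_nhds.add h1
      simpa [hℓ_def] using h2
    exact tendsto_of_tendsto_of_tendsto_of_le_of_le tendsto_const_nhds hup
      (fun N => (humem' N).1.le) (fun N => (humem' N).2.le)
  have hbot : |F (u 0) - F s| ≤ 2*CC + 2*DD := lim_gen u s hulim hustep
  -- the top chain (towards t)
  have hI0 : ∫⁻ x in T, Φ x (u 0) ≤ ENNReal.ofReal (3 * b / h) := by
    have he : (∫⁻ x in T, Φ x (u 0)) = ∫⁻ y in T, Φ (u 0) y :=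
      lintegral_congr (fun x => hsymm x (u 0))
    rw [he, ← hℓ0]
    exact huI' 0
  have hgmeas : Measurable (fun x => Φ x (u 0)) := by
    have heq : (fun x => Φ x (u 0)) = Function.uncurry Φ ∘ (fun y => (y, u 0)) := rfl
    rw [heq]
    exact hΦmeas.comp (measurable_id.prodMk measurable_const)
  obtain ⟨v, hvmem, hvlink0, hvI, hvlink⟩ := chain T Φ hΦmeas hsymm B hBt hintF
    (fun x => Φ x (u 0)) hgmeas
    (ENNReal.ofReal (3 * b / h)) ENNReal.ofReal_ne_top hI0
    (fun n => t - ℓ n) (fun _ => t)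
    (fun n => by show t - ℓ n < t; have := hℓpos n; linarith)
    (fun n x hx => by
      have hx1 : t - ℓ n < x := hx.1
      have hx2 : x < t := hx.2
      have h1 := hℓle n
      rw [hT_def]
      have hst' : s + h = t := by rw [hh_def]; ring
      exact ⟨by linarith, by linarith⟩)
    (fun n x hx => by
      have hx1 : t - ℓ (n+1) < x := hx.1
      have hx2 : x < t := hx.2
      have h1 := hℓanti n
      exact ⟨show t - ℓ n < x by linarith, hx2⟩)
  have hvmem' : ∀ n, t - ℓ n < v n ∧ v n < t := fun n => hvmem n
  have hvI' : ∀ n, (∫⁻ y in T, Φ (v n) y) ≤ ENNReal.ofReal (3 * b / ℓ n) := by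
    intro n
    apply huI_conv
    have h1 := hvI n
    have h2 : t - (t - ℓ n) = ℓ n := by ring
    simpa [h2] using h1
  have hvlink' : ∀ n, Φ (v (n+1)) (v n) ≤ ENNReal.ofReal (36 * 16^n * b / h^2) := by
    intro n
    apply link_conv _ _ n _ (hvI' n)
    have h1 := hvlink n
    have h2 : t - (t - ℓ (n+1)) = ℓ (n+1) := by ring
    simpa [h2] using h1
  have hvabs : ∀ n, |v (n+1) - v n| ≤ ℓ n := by
    intro n
    have h1 := hvmem' (n+1)
    have h2 := hvmem' n
    have h3 := hℓanti n
    rw [abs_le]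
    constructor <;> [skip; skip] <;> [linarith [h1.1, h2.2]; linarith [h1.2, h2.1]]
  have hvstep := dstep_gen v hvabs hvlink'
  have hvlim : Filter.Tendsto v Filter.atTop (nhds t) := by
    have hlo : Filter.Tendsto (fun N => t - ℓ N) Filter.atTop (nhds t) := by
      have h1 := (tendsto_pow_atTop_nhds_zero_of_lt_one
        (by norm_num : (0:ℝ) ≤ 1/4) (by norm_num : (1/4:ℝ) < 1)).const_mul h
      have h2 : Filter.Tendsto (fun N : ℕ => t - h * (1/4:ℝ)^N) Filter.atTop
          (nhds (t - h * 0)) := tendsto_const_nhds.sub h1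
      simpa [hℓ_def] using h2
    exact tendsto_of_tendsto_of_tendsto_of_le_of_le hlo tendsto_const_nhds
      (fun N => (hvmem' N).1.le) (fun N => (hvmem' N).2.le)
  have htop : |F (v 0) - F t| ≤ 2*CC + 2*DD := lim_gen v t hvlim hvstep
  -- the link between the two chains
  have hlink0 : Φ (v 0) (u 0) ≤ ENNReal.ofReal (9 * b / h^2) := by
    have h1 := hvlink0
    have h2 : t - (t - ℓ 0) = h := by rw [hℓ0]; ring
    rw [show ((fun (_ : ℕ) => t) 0 - (fun n => t - ℓ n) 0) = t - (t - ℓ 0) from rfl] at h1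
    rw [h2, three_div _ _ (by positivity) hh] at h1
    have h3 : 3 * (3 * b / h) / h = 9 * b / h^2 := by field_simp; ring
    rwa [h3] at h1
  have hlinkabs : |v 0 - u 0| ≤ h := by
    have h1 := hvmem' 0
    have h2 := humem' 0
    rw [hℓ0] at h1 h2
    rw [abs_le]
    constructor <;> [skip; skip] <;> [linarith [h1.1, h2.2]; linarith [h1.2, h2.1]]
  have hlinkb : |F (v 0) - F (u 0)| ≤
      Real.sqrt (2*c*h * Real.log (1 + 9 * b / h^2)) := by
    apply increment_bound F c hc0 _ _ _ _ (by positivity) hlinkabs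
    have h1 := hlink0
    simp only [hΦ_def] at h1
    exact h1
  have hlinkb2 : |F (v 0) - F (u 0)| ≤ Real.sqrt (2*c*h) *
      (Real.sqrt L₁ + Real.sqrt (Real.log 9) + Real.sqrt (2*P₂) + Real.sqrt (2*Q₂)) := by
    refine le_trans hlinkb ?_
    rw [Real.sqrt_mul (by positivity : (0:ℝ) ≤ 2*c*h)]
    apply mul_le_mul_of_nonneg_left _ (Real.sqrt_nonneg _)
    have hl9 : Real.log (1 + 9 * b / h^2) ≤ L₁ + Real.log 9 + 2*P₂ + 2*Q₂ := by
      have := logb 9 (by norm_num)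
      linarith
    refine le_trans (Real.sqrt_le_sqrt hl9) ?_
    calc Real.sqrt (L₁ + Real.log 9 + 2*P₂ + 2*Q₂)
        ≤ Real.sqrt (L₁ + Real.log 9 + 2*P₂) + Real.sqrt (2*Q₂) :=
          sqrt_add_le (by positivity) (by positivity)
      _ ≤ (Real.sqrt (L₁ + Real.log 9) + Real.sqrt (2*P₂)) + Real.sqrt (2*Q₂) :=
          add_le_add_left (sqrt_add_le (by positivity) (by positivity)) _
      _ ≤ ((Real.sqrt L₁ + Real.sqrt (Real.log 9)) + Real.sqrt (2*P₂)) + Real.sqrt (2*Q₂) :=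
          add_le_add_left (add_le_add_left (sqrt_add_le hL₁ hlog9) _) _
  -- assemble
  have hFts : F t = f t := hFf t ⟨ht0.le, le_refl t⟩
  have hFss : F s = f s := hFf s ⟨hs, by linarith⟩
  have htotal : |f t - f s| ≤ 4*CC + 4*DD + Real.sqrt (2*c*h) *
      (Real.sqrt L₁ + Real.sqrt (Real.log 9) + Real.sqrt (2*P₂) + Real.sqrt (2*Q₂)) := by
    rw [← hFts, ← hFss]
    have htri : |F t - F s| ≤ |F (v 0) - F t| + |F (v 0) - F (u 0)| + |F (u 0) - F s| := by
      have e1 : F t - F s = -(F (v 0) - F t) + (F (v 0) - F (u 0)) + (F (u 0) - F s) := by ring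
      rw [e1]
      calc |(-(F (v 0) - F t) + (F (v 0) - F (u 0))) + (F (u 0) - F s)|
          ≤ |(-(F (v 0) - F t) + (F (v 0) - F (u 0)))| + |F (u 0) - F s| := abs_add_le _ _
        _ ≤ (|(-(F (v 0) - F t))| + |F (v 0) - F (u 0)|) + |F (u 0) - F s| :=
            add_le_add_left (abs_add_le _ _) _
        _ = |F (v 0) - F t| + |F (v 0) - F (u 0)| + |F (u 0) - F s| := by rw [abs_neg]
    linarith [htri, htop, hbot, hlinkb2]
  -- final numeric comparison
  refine le_trans htotal ?_
  rw [abs_of_nonneg hlogt]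
  have hsplit : Real.sqrt (2*c*h) = Real.sqrt (2*c) * Real.sqrt h :=
    Real.sqrt_mul (by positivity) h
  have hsplit2 : Real.sqrt (h*(1 + P₂ + ε * Real.log t))
      = Real.sqrt h * Real.sqrt (1 + P₂ + ε * Real.log t) := Real.sqrt_mul hh.le _
  set SM : ℝ := Real.sqrt (1 + P₂ + ε * Real.log t) with hSM_def
  have hQ₂eq : ε * Real.log t = Q₂ := by rw [hQ₂_def]
  have hsqM : 1 ≤ SM := by
    rw [hSM_def, hQ₂eq]
    have h1 := Real.sqrt_le_sqrt (show (1:ℝ) ≤ 1 + P₂ + Q₂ by linarith)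
    rwa [Real.sqrt_one] at h1
  have hSM0 : 0 ≤ SM := le_trans zero_le_one hsqM
  have hPM : Real.sqrt P₂ ≤ SM := by
    rw [hSM_def]; apply Real.sqrt_le_sqrt; rw [hQ₂eq]; linarith
  have hQM : Real.sqrt Q₂ ≤ SM := by
    rw [hSM_def]; apply Real.sqrt_le_sqrt; rw [hQ₂eq]; linarith
  have h2P : Real.sqrt (2*P₂) = Real.sqrt 2 * Real.sqrt P₂ := Real.sqrt_mul (by norm_num) _
  have h2Q : Real.sqrt (2*Q₂) = Real.sqrt 2 * Real.sqrt Q₂ := Real.sqrt_mul (by norm_num) _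
  have hbra : 4*SC + 4*Real.sqrt (Real.log 16) +
      (Real.sqrt L₁ + Real.sqrt (Real.log 9) + Real.sqrt (2*P₂) + Real.sqrt (2*Q₂)) ≤
      8*(Real.sqrt L₁ + Real.sqrt 2 * (1 + Real.sqrt Real.pi))*SM := by
    rw [hSC_def, h2P, h2Q]
    have hnum := numeric
    have hs2 : (0:ℝ) ≤ Real.sqrt 2 := Real.sqrt_nonneg 2
    have hsL : (0:ℝ) ≤ Real.sqrt L₁ := Real.sqrt_nonneg L₁
    have m1 : 5*(Real.sqrt 2 * Real.sqrt P₂) ≤ 5*(Real.sqrt 2 * SM) := by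
      apply mul_le_mul_of_nonneg_left _ (by norm_num)
      exact mul_le_mul_of_nonneg_left hPM hs2
    have m2 : 5*(Real.sqrt 2 * Real.sqrt Q₂) ≤ 5*(Real.sqrt 2 * SM) := by
      apply mul_le_mul_of_nonneg_left _ (by norm_num)
      exact mul_le_mul_of_nonneg_left hQM hs2
    have m3 : 5*Real.sqrt L₁ ≤ 5*(Real.sqrt L₁ * SM) := by
      apply mul_le_mul_of_nonneg_left _ (by norm_num)
      exact le_mul_of_one_le_right hsL hsqM
    have a5 : (0:ℝ) ≤ 8*(Real.sqrt 2 * Real.sqrt Real.pi) - 2*Real.sqrt 2 := by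
      linarith [Real.sqrt_nonneg (Real.log 9), Real.sqrt_nonneg (Real.log 36),
        Real.sqrt_nonneg (Real.log 16)]
    have m4 : Real.sqrt (Real.log 9) + 4*Real.sqrt (Real.log 36) + 4*Real.sqrt (Real.log 16)
        ≤ (8*(Real.sqrt 2 * Real.sqrt Real.pi) - 2*Real.sqrt 2)*SM := by
      refine le_trans ?_ (le_mul_of_one_le_right a5 hsqM)
      linarith
    linarith [m1, m2, m3, m4]
  calc 4*CC + 4*DD + Real.sqrt (2*c*h) *
        (Real.sqrt L₁ + Real.sqrt (Real.log 9) + Real.sqrt (2*P₂) + Real.sqrt (2*Q₂))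
      = (Real.sqrt (2*c) * Real.sqrt h) * (4*SC + 4*Real.sqrt (Real.log 16) +
          (Real.sqrt L₁ + Real.sqrt (Real.log 9) + Real.sqrt (2*P₂) + Real.sqrt (2*Q₂))) := by
        rw [hCC_def, hDD_def, hsplit]; ring
    _ ≤ (Real.sqrt (2*c) * Real.sqrt h) *
          (8*(Real.sqrt L₁ + Real.sqrt 2 * (1 + Real.sqrt Real.pi))*SM) :=
        mul_le_mul_of_nonneg_left hbra (by positivity)
    _ = 8 * Real.sqrt (2*c) * (Real.sqrt L₁ + Real.sqrt 2 * (1 + Real.sqrt Real.pi)) *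
          (Real.sqrt h * SM) := by ring
    _ = 8 * Real.sqrt (2*c) * (Real.sqrt L₁ + Real.sqrt 2 * (1 + Real.sqrt Real.pi)) *
          Real.sqrt (h*(1 + P₂ + ε * Real.log t)) := by rw [hsplit2]

end DetGRR

open MeasureTheory

/-- **Key deterministic estimate in the proof of the main theorem.**
Let `c > 1`, `ε > 0`, `ξ ≥ 0`, `t ≥ 1` and let `f : [0,t] → ℝ` be continuous with
`∫₀ᵗ∫₀ᵗ (exp(|f(x) − f(y)|²/(2c|x − y|)) − 1) dx dy ≤ t^{2(1+ε)} ξ`.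
Then for all `0 ≤ s ≤ t` with `h := t − s > 0`,
`|f(t) − f(s)| ≤ 8√(2c) (√(ln(4ξ+1)) + √2(1+√π)) √(h (1 + ln(t/h) + ε|ln t|))`. -/
theorem deterministic_modulus_estimate
    (c ε ξ t : ℝ) (hc : 1 < c) (hε : 0 < ε) (hξ : 0 ≤ ξ) (ht : 1 ≤ t)
    (f : ℝ → ℝ) (hf : ContinuousOn f (Set.Icc 0 t))
    (hint : ∫⁻ x in Set.Icc (0:ℝ) t, ∫⁻ y in Set.Icc (0:ℝ) t,
        ENNReal.ofReal (Real.exp (|f x - f y| ^ 2 / (2 * c * |x - y|)) - 1) ≤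
      ENNReal.ofReal (t ^ (2 * (1 + ε)) * ξ)) :
    ∀ s : ℝ, 0 ≤ s → s < t →
      |f t - f s| ≤
        8 * Real.sqrt (2 * c) *
          (Real.sqrt (Real.log (4 * ξ + 1)) + Real.sqrt 2 * (1 + Real.sqrt Real.pi)) *
          Real.sqrt ((t - s) * (1 + Real.log (t / (t - s)) + ε * |Real.log t|)) := by
  rcases lt_or_eq_of_le hξ with hξ' | hξ'
  · exact DetGRR.main_pos c ε ξ t hc hε hξ' ht f hf hint
  · intro s hs hst
    have key : ∀ δ : ℝ, 0 < δ →
        |f t - f s| ≤ 8 * Real.sqrt (2 * c) *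
          (Real.sqrt (Real.log (4 * δ + 1)) + Real.sqrt 2 * (1 + Real.sqrt Real.pi)) *
          Real.sqrt ((t - s) * (1 + Real.log (t / (t - s)) + ε * |Real.log t|)) := by
      intro δ hδ
      apply DetGRR.main_pos c ε δ t hc hε hδ ht f hf _ s hs hst
      refine le_trans hint (ENNReal.ofReal_le_ofReal ?_)
      rw [← hξ', mul_zero]
      have ht0 : (0:ℝ) < t := lt_of_lt_of_le one_pos ht
      positivity
    set R : ℝ := Real.sqrt ((t - s) * (1 + Real.log (t / (t - s)) + ε * |Real.log t|)) with hR
    have hcont : Filter.Tendsto (fun δ : ℝ => 8 * Real.sqrt (2 * c) *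
        (Real.sqrt (Real.log (4 * δ + 1)) + Real.sqrt 2 * (1 + Real.sqrt Real.pi)) * R)
        (nhdsWithin 0 (Set.Ioi 0))
        (nhds (8 * Real.sqrt (2 * c) *
          (Real.sqrt (Real.log (4 * 0 + 1)) + Real.sqrt 2 * (1 + Real.sqrt Real.pi)) * R)) := by
      apply Filter.Tendsto.mono_left _ nhdsWithin_le_nhds
      have h1 : ContinuousAt (fun δ : ℝ => Real.log (4 * δ + 1)) 0 := by
        apply ContinuousAt.comp (Real.continuousAt_log (by norm_num))
        fun_prop
      have h2 : ContinuousAt (fun δ : ℝ => Real.sqrt (Real.log (4 * δ + 1))) 0 :=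
        Real.continuous_sqrt.continuousAt.comp h1
      have h3 : ContinuousAt (fun δ : ℝ => 8 * Real.sqrt (2 * c) *
          (Real.sqrt (Real.log (4 * δ + 1)) + Real.sqrt 2 * (1 + Real.sqrt Real.pi)) * R) 0 :=
        (continuousAt_const.mul (h2.add continuousAt_const)).mul continuousAt_const
      exact h3
    have hle : |f t - f s| ≤ 8 * Real.sqrt (2 * c) *
        (Real.sqrt (Real.log (4 * 0 + 1)) + Real.sqrt 2 * (1 + Real.sqrt Real.pi)) * R := by
      refine ge_of_tendsto hcont ?_
      filter_upwards [self_mem_nhdsWithin] with δ hδ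
      exact key δ hδ
    rw [← hξ']
    simpa using hle
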